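/- Let h ≥ r be positive integers and 0 < β < 1. There exists α > 0 depending only on h, r, β such that for every graph G on n vertices with p = p_r(G) > 4j n^{-1/r}, for each i ∈ [h] and r ≤ j ≤ h: ∑_{S ∈ A*_{i,j}} |N(S)|^r ≥ (1/2^{j+1} − β) n^{j+r} p^{jr}, where A*_{i,j} is the set of i-good length-j sequences with pairwise distinct entries. -/

import Mathlib

/-- The common neighborhood of a sequence of vertices. -/
def commNbhd {V : Type} (G : SimpleGraph V) {j : ℕ} (S : Fin j → V) : Set V :=
  {v | ∀ a : Fin j, G.Adj (S a) v}

/-- The `r`-norm density `p_r(G) := ((∑_v d(v)^r)/n^{r+1})^{1/r}`. -/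
noncomputable def rnormDensity {V : Type} [Fintype V] (G : SimpleGraph V)
    [DecidableRel G.Adj] (r : ℕ) : ℝ :=
  ((∑ v : V, (G.degree v : ℝ) ^ r) / (Fintype.card V : ℝ) ^ (r + 1)) ^ ((r : ℝ)⁻¹)

/-- `IsGood G α β p h i j S` : the length-`j` vertex sequence `S` is `i`-good relative
to `(α, β, h, r)` in `G`, where `p = p_r(G)`. A sequence `T` is `0`-good if
`|N(T)| ≥ α p^{|T|} n`; for `i ≥ 1`, `S` is `i`-good if it is `0`-good and for every
`|S| ≤ k ≤ h`, at least `(1-β)|N(S)|^k` of the length-`k` sequences in `N(S)` are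
`(i-1)`-good. -/
def IsGood {V : Type} [Fintype V] (G : SimpleGraph V) (α β p : ℝ) (h : ℕ) :
    ℕ → (j : ℕ) → (Fin j → V) → Prop
  | 0, j, S => α * p ^ j * (Fintype.card V : ℝ) ≤ (Nat.card (commNbhd G S) : ℝ)
  | i + 1, j, S =>
      (α * p ^ j * (Fintype.card V : ℝ) ≤ (Nat.card (commNbhd G S) : ℝ)) ∧
      ∀ k : ℕ, j ≤ k → k ≤ h →
        (1 - β) * (Nat.card (commNbhd G S) : ℝ) ^ k ≤
          (Nat.card {T : Fin k → V // (∀ a, T a ∈ commNbhd G S) ∧ IsGood G α β p h i k T} : ℝ)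


set_option maxHeartbeats 2000000
section NGsection

namespace NG
open Finset
open scoped Classical

lemma card_pi_mem {V : Type} (t : Set V) (k : ℕ) :
    Nat.card {T : Fin k → V // ∀ a, T a ∈ t} = Nat.card t ^ k := by
  classical
  have e : {T : Fin k → V // ∀ a, T a ∈ t} ≃ (Fin k → t) :=
    Equiv.subtypePiEquivPi (p := fun _ b => b ∈ t)
  rw [Nat.card_congr e, Nat.card_pi]
  simp

lemma card_subtype_eq_sum {ι : Type} [Fintype ι] (P : ι → Prop) [DecidablePred P] :
    (Nat.card {x // P x} : ℝ) = ∑ x : ι, if P x then (1 : ℝ) else 0 := by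
  rw [Nat.card_eq_fintype_card, Fintype.card_subtype, Finset.card_filter]
  push_cast
  rfl

lemma card_inj_mem {V : Type} [Fintype V] (t : Set V) (j : ℕ) :
    Nat.card {S : Fin j → V // Function.Injective S ∧ ∀ b, S b ∈ t} =
      (Nat.card t).descFactorial j := by
  classical
  have e : {S : Fin j → V // Function.Injective S ∧ ∀ b, S b ∈ t} ≃ (Fin j ↪ t) := by
    refine ⟨fun S => ⟨fun b => ⟨S.1 b, S.2.2 b⟩, fun a b hab => S.2.1 (by
      simpa using congrArg Subtype.val hab)⟩,
      fun e => ⟨fun b => (e b : V), ⟨fun a b hab => e.injective (Subtype.ext hab),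
        fun b => (e b).2⟩⟩, ?_, ?_⟩
    · intro S; rfl
    · intro e; rfl
  rw [Nat.card_congr e, Nat.card_eq_fintype_card, Fintype.card_embedding_eq, Fintype.card_fin,
    Nat.card_eq_fintype_card]

lemma ite_nonneg (c : Prop) [Decidable c] (a : ℝ) (ha : 0 ≤ a) : 0 ≤ if c then a else 0 := by
  split <;> simp [ha]

lemma pow_mean {ι : Type} (F : Finset ι) (f : ι → ℝ) (hf : ∀ i ∈ F, 0 ≤ f i)
    {m k : ℕ} (hm : 1 ≤ m) (hmk : m ≤ k) :
    (∑ i ∈ F, f i ^ m) ^ k ≤ (F.card : ℝ) ^ (k - m) * (∑ i ∈ F, f i ^ k) ^ m := by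
  classical
  rcases F.eq_empty_or_nonempty with rfl | hne
  · simp only [Finset.sum_empty]
    rw [zero_pow (by omega), zero_pow (by omega)]
    simp
  have hN : (0 : ℝ) < (F.card : ℝ) := by exact_mod_cast Finset.card_pos.2 hne
  have hm0 : (m : ℝ) ≠ 0 := by positivity
  have hk1 : 1 ≤ k := le_trans hm hmk
  have hk0 : (k : ℝ) ≠ 0 := by positivity
  set N : ℝ := (F.card : ℝ) with hNdef
  set P : ℝ := ∑ i ∈ F, f i ^ m with hP
  set Q : ℝ := ∑ i ∈ F, f i ^ k with hQ
  have hP0 : 0 ≤ P := Finset.sum_nonneg fun i hi => pow_nonneg (hf i hi) m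
  have hQ0 : 0 ≤ Q := Finset.sum_nonneg fun i hi => pow_nonneg (hf i hi) k
  set w : ι → ℝ := fun _ => N⁻¹ with hw
  have key := Real.arith_mean_le_rpow_mean F w (fun i => f i ^ m)
    (fun i _ => by positivity) (by simp [hw, hNdef]; field_simp)
    (fun i hi => pow_nonneg (hf i hi) m) (p := (k : ℝ) / m)
    (by rw [le_div_iff₀ (by positivity)]; exact_mod_cast by simpa using hmk)
  have hz : ∀ i ∈ F, ((f i ^ m : ℝ) : ℝ) ^ ((k : ℝ) / m) = f i ^ k := by
    intro i hi
    rw [← Real.rpow_natCast (f i) m, ← Real.rpow_mul (hf i hi), mul_comm,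
      div_mul_cancel₀ _ hm0, Real.rpow_natCast]
  have e1 : ∑ i ∈ F, w i * f i ^ m = N⁻¹ * P := by rw [hP, mul_sum]
  have e2 : ∑ i ∈ F, w i * ((f i ^ m : ℝ)) ^ ((k : ℝ) / m) = N⁻¹ * Q := by
    rw [hQ, mul_sum]
    exact Finset.sum_congr rfl fun i hi => by rw [hz i hi]
  rw [e1, e2, one_div_div] at key
  have hNQ : 0 ≤ N⁻¹ * Q := by positivity
  have h3 : (N⁻¹ * P) ^ k ≤ (N⁻¹ * Q) ^ m := by
    calc (N⁻¹ * P) ^ k ≤ ((N⁻¹ * Q) ^ ((m : ℝ) / k)) ^ k :=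
          pow_le_pow_left₀ (by positivity) key k
      _ = (N⁻¹ * Q) ^ m := by
          rw [← Real.rpow_natCast ((N⁻¹ * Q) ^ ((m : ℝ) / k)) k, ← Real.rpow_mul hNQ,
            div_mul_cancel₀ _ hk0, Real.rpow_natCast]
  have hNk : N ^ k * (N⁻¹) ^ k = 1 := by
    rw [← mul_pow, mul_inv_cancel₀ (ne_of_gt hN), one_pow]
  have hsplit : N ^ k = N ^ (k - m) * N ^ m := by rw [← pow_add, Nat.sub_add_cancel hmk]
  calc P ^ k = N ^ k * ((N⁻¹) ^ k * P ^ k) := by rw [← mul_assoc, hNk, one_mul]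
    _ ≤ N ^ k * ((N⁻¹) ^ m * Q ^ m) := by
        refine mul_le_mul_of_nonneg_left ?_ (pow_nonneg hN.le k)
        rw [← mul_pow, ← mul_pow]; exact h3
    _ = N ^ (k - m) * Q ^ m := by
        rw [← mul_assoc, hsplit, mul_assoc (N ^ (k-m)) (N ^ m) ((N⁻¹) ^ m), ← mul_pow,
          mul_inv_cancel₀ (ne_of_gt hN), one_pow, mul_one]

lemma mem_comm_symm {V : Type} (G : SimpleGraph V) {j k : ℕ} (S : Fin j → V) (T : Fin k → V) :
    (∀ a, T a ∈ commNbhd G S) ↔ ∀ b, S b ∈ commNbhd G T := by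
  simp only [commNbhd, Set.mem_setOf_eq]
  exact ⟨fun H b a => (H a b).symm, fun H a b => (H b a).symm⟩

lemma count_split {V : Type} [Fintype V] (G : SimpleGraph V) {j k : ℕ}
    (P : (Fin k → V) → Prop) (S : Fin j → V) :
    Nat.card {T : Fin k → V // (∀ a, T a ∈ commNbhd G S) ∧ P T}
      + Nat.card {T : Fin k → V // (∀ a, T a ∈ commNbhd G S) ∧ ¬ P T}
      = Nat.card (commNbhd G S) ^ k := by
  classical
  rw [← card_pi_mem (commNbhd G S) k, Nat.card_eq_fintype_card, Nat.card_eq_fintype_card,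
    Nat.card_eq_fintype_card, Fintype.card_subtype, Fintype.card_subtype, Fintype.card_subtype,
    ← Finset.filter_filter, ← Finset.filter_filter]
  exact Finset.card_filter_add_card_filter_not _

lemma bad0 {V : Type} [Fintype V] (G : SimpleGraph V) (α p : ℝ) (hα : 0 ≤ α) (hp : 0 ≤ p)
    (j m : ℕ) :
    ∑ S : Fin j → V, (if ¬ (α * p ^ j * (Fintype.card V : ℝ) ≤ (Nat.card (commNbhd G S) : ℝ))
        then (Nat.card (commNbhd G S) : ℝ) ^ m else 0)
      ≤ α ^ m * (p ^ (j * m) * (Fintype.card V : ℝ) ^ (j + m)) := by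
  classical
  set n : ℝ := (Fintype.card V : ℝ) with hn
  have hn0 : 0 ≤ n := by positivity
  have hb : ∀ S : Fin j → V,
      (if ¬ (α * p ^ j * n ≤ (Nat.card (commNbhd G S) : ℝ))
        then (Nat.card (commNbhd G S) : ℝ) ^ m else 0) ≤ (α * p ^ j * n) ^ m := by
    intro S
    by_cases hS : α * p ^ j * n ≤ (Nat.card (commNbhd G S) : ℝ)
    · rw [if_neg (by simpa using hS)]
      positivity
    · rw [if_pos hS]
      exact pow_le_pow_left₀ (by positivity) (le_of_not_ge hS) m
  calc ∑ S : Fin j → V, (if ¬ (α * p ^ j * n ≤ (Nat.card (commNbhd G S) : ℝ))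
          then (Nat.card (commNbhd G S) : ℝ) ^ m else 0)
      ≤ (Finset.univ : Finset (Fin j → V)).card • (α * p ^ j * n) ^ m :=
        Finset.sum_le_card_nsmul _ _ _ (fun S _ => hb S)
    _ = (Fintype.card V : ℝ) ^ j * (α * p ^ j * n) ^ m := by
        rw [nsmul_eq_mul, Finset.card_univ, Fintype.card_fun, Fintype.card_fin]
        push_cast
        rfl
    _ = α ^ m * (p ^ (j * m) * n ^ (j + m)) := by
        rw [mul_pow, mul_pow, ← pow_mul, pow_add]
        ring

noncomputable def sconst (β : ℝ) (h : ℕ) : ℕ → ℝ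
  | 0 => β
  | q + 1 => β * (sconst β h q / (2 * h)) ^ h

lemma sconst_pos {β : ℝ} {h : ℕ} (hβ0 : 0 < β) (hh : 1 ≤ h) : ∀ q, 0 < sconst β h q
  | 0 => hβ0
  | q + 1 => by
    have := sconst_pos hβ0 hh q
    have hh0 : (0:ℝ) < 2 * h := by positivity
    simp only [sconst]
    positivity

lemma sconst_le {β : ℝ} {h : ℕ} (hβ0 : 0 < β) (hβ1 : β < 1) (hh : 1 ≤ h) :
    ∀ q, sconst β h q ≤ β
  | 0 => le_refl _
  | q + 1 => by
    have h1 := sconst_pos hβ0 hh q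
    have h2 := sconst_le hβ0 hβ1 hh q
    have hhR : (1:ℝ) ≤ (h:ℝ) := by exact_mod_cast hh
    have hfrac : sconst β h q / (2 * h) ≤ 1 := by
      rw [div_le_one (by positivity)]
      nlinarith
    simp only [sconst]
    calc β * (sconst β h q / (2 * h)) ^ h ≤ β * 1 := by
          refine mul_le_mul_of_nonneg_left ?_ hβ0.le
          exact pow_le_one₀ (by positivity) hfrac
      _ = β := mul_one β

lemma sconst_succ_le {β : ℝ} {h : ℕ} (hβ0 : 0 < β) (hβ1 : β < 1) (hh : 1 ≤ h) (q : ℕ) :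
    sconst β h (q + 1) ≤ sconst β h q := by
  have h1 := sconst_pos hβ0 hh q
  have h2 := sconst_le hβ0 hβ1 hh q
  have hhR : (1:ℝ) ≤ (h:ℝ) := by exact_mod_cast hh
  have hfrac : sconst β h q / (2 * h) ≤ 1 := by
    rw [div_le_one (by positivity)]
    nlinarith
  have hfrac0 : 0 ≤ sconst β h q / (2 * h) := by positivity
  show β * (sconst β h q / (2 * h)) ^ h ≤ sconst β h q
  calc β * (sconst β h q / (2 * h)) ^ h ≤ 1 * (sconst β h q / (2 * h)) ^ 1 := by
        refine mul_le_mul hβ1.le (pow_le_pow_of_le_one hfrac0 hfrac hh) (by positivity) zero_le_one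
    _ = sconst β h q / (2 * h) := by ring
    _ ≤ sconst β h q := by
        rw [div_le_iff₀ (by positivity)]
        nlinarith

lemma sconst_anti {β : ℝ} {h : ℕ} (hβ0 : 0 < β) (hβ1 : β < 1) (hh : 1 ≤ h) {a b : ℕ}
    (hab : a ≤ b) : sconst β h b ≤ sconst β h a := by
  induction b with
  | zero => simp_all
  | succ b ih =>
    rcases Nat.lt_or_ge a (b+1) with hlt | hge
    · exact le_trans (sconst_succ_le hβ0 hβ1 hh b) (ih (by omega))
    · have : a = b + 1 := by omega
      subst this; rfl

variable {V : Type} [Fintype V] (G : SimpleGraph V)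

lemma lemA (α β p : ℝ) (h i j k m : ℕ) (hβ0 : 0 < β) (hβ1 : β < 1) (hp : 0 ≤ p)
    (hm : 1 ≤ m) (hmk : m ≤ k) (hkh : k ≤ h) (hj1 : 1 ≤ j)
    (Dc : ℝ) (hDc0 : 0 < Dc) (hDcβ : Dc ≤ β)
    (hD : ∑ T : Fin k → V, (if ¬ IsGood G α β p h i k T
            then (Nat.card (commNbhd G T) : ℝ) ^ j else 0)
          ≤ Dc * (p ^ (k * j) * (Fintype.card V : ℝ) ^ (k + j))) :
    ∑ S : Fin j → V, (if β * (Nat.card (commNbhd G S) : ℝ) ^ k <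
          (Nat.card {T : Fin k → V // (∀ a, T a ∈ commNbhd G S) ∧ ¬ IsGood G α β p h i k T} : ℝ)
        then (Nat.card (commNbhd G S) : ℝ) ^ m else 0)
      ≤ (Dc / β) ^ ((1 : ℝ) / h) * (p ^ (j * m) * (Fintype.card V : ℝ) ^ (j + m)) := by
  classical
  set n : ℝ := (Fintype.card V : ℝ) with hn
  have hn0 : (0 : ℝ) ≤ n := by positivity
  have hh1 : 1 ≤ h := le_trans (le_trans hm hmk) hkh
  have hk1 : 1 ≤ k := le_trans hm hmk
  set x : (Fin j → V) → ℝ := fun S => (Nat.card (commNbhd G S) : ℝ) with hx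
  set y : (Fin k → V) → ℝ := fun T => (Nat.card (commNbhd G T) : ℝ) with hy
  have hx0 : ∀ S, 0 ≤ x S := fun S => by positivity
  have hy0 : ∀ T, 0 ≤ y T := fun T => by positivity
  set bc : (Fin j → V) → ℝ := fun S =>
    (Nat.card {T : Fin k → V // (∀ a, T a ∈ commNbhd G S) ∧ ¬ IsGood G α β p h i k T} : ℝ)
    with hbc
  set F : Finset (Fin j → V) := univ.filter (fun S => β * x S ^ k < bc S) with hF
  set A : ℝ := ∑ S ∈ F, x S ^ m with hA
  set B : ℝ := ∑ S ∈ F, x S ^ k with hB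
  set D : ℝ := ∑ T : Fin k → V, (if ¬ IsGood G α β p h i k T then y T ^ j else 0) with hD2
  have hgoal : ∑ S : Fin j → V, (if β * x S ^ k < bc S then x S ^ m else 0) = A := by
    rw [hA, Finset.sum_filter]
  rw [hgoal]
  have hA0 : 0 ≤ A := Finset.sum_nonneg fun S _ => pow_nonneg (hx0 S) m
  have hB0 : 0 ≤ B := Finset.sum_nonneg fun S _ => pow_nonneg (hx0 S) k
  -- Step: β * B ≤ sum of bad counts over F
  have step1 : β * B ≤ ∑ S ∈ F, bc S := by
    rw [hB, Finset.mul_sum]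
    refine Finset.sum_le_sum fun S hS => ?_
    exact le_of_lt (Finset.mem_filter.1 hS).2
  -- Step: sum of bad counts ≤ D
  have step2 : ∑ S ∈ F, bc S ≤ D := by
    have ebc : ∀ S : Fin j → V, bc S = ∑ T : Fin k → V,
        (if (∀ a, T a ∈ commNbhd G S) ∧ ¬ IsGood G α β p h i k T then (1 : ℝ) else 0) := by
      intro S; rw [hbc]; exact card_subtype_eq_sum _
    calc ∑ S ∈ F, bc S
        = ∑ T : Fin k → V, ∑ S ∈ F,
            (if (∀ a, T a ∈ commNbhd G S) ∧ ¬ IsGood G α β p h i k T then (1 : ℝ) else 0) := by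
          rw [← Finset.sum_comm]
          exact Finset.sum_congr rfl fun S _ => ebc S
      _ ≤ D := by
          rw [hD2]
          refine Finset.sum_le_sum fun T _ => ?_
          by_cases hgT : IsGood G α β p h i k T
          · simp [hgT]
          · rw [if_pos hgT]
            calc ∑ S ∈ F, (if (∀ a, T a ∈ commNbhd G S) ∧ ¬ IsGood G α β p h i k T
                  then (1 : ℝ) else 0)
                ≤ ∑ S : Fin j → V, (if ∀ b, S b ∈ commNbhd G T then (1 : ℝ) else 0) := by
                  refine le_trans (Finset.sum_le_sum_of_subset_of_nonneg (Finset.filter_subset _ _)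
                    (fun S _ _ => by positivity)) ?_
                  refine Finset.sum_le_sum fun S _ => ?_
                  by_cases hc : ∀ a, T a ∈ commNbhd G S
                  · rw [if_pos ⟨hc, hgT⟩, if_pos ((mem_comm_symm G S T).1 hc)]
                  · rw [if_neg (by tauto)]
                    positivity
              _ = y T ^ j := by
                  rw [← card_subtype_eq_sum (fun S : Fin j → V => ∀ b, S b ∈ commNbhd G T), hy]
                  rw [card_pi_mem (commNbhd G T) j]
                  push_cast
                  rfl
  -- combine
  have hDb : D ≤ Dc * (p ^ (k * j) * n ^ (k + j)) := hD
  have hBle : β * B ≤ Dc * (p ^ (k * j) * n ^ (k + j)) := le_trans step1 (le_trans step2 hDb)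
  -- power mean
  obtain ⟨t, rfl⟩ : ∃ t, k = m + t := ⟨k - m, by omega⟩
  have pm := pow_mean F x (fun S _ => hx0 S) hm hmk
  have hFcard : (F.card : ℝ) ≤ n ^ j := by
    rw [hn]
    calc (F.card : ℝ) ≤ ((univ : Finset (Fin j → V)).card : ℝ) := by
          exact_mod_cast Finset.card_le_card (Finset.filter_subset _ _)
      _ = (Fintype.card V : ℝ) ^ j := by
          rw [Finset.card_univ, Fintype.card_fun, Fintype.card_fin]; push_cast; rfl
  have hBQ : B ≤ Dc * (p ^ ((m + t) * j) * n ^ (m + t + j)) / β := by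
    rw [le_div_iff₀ hβ0, mul_comm]
    exact hBle
  have pm2 : A ^ (m + t) ≤ (n ^ j) ^ t * (Dc * (p ^ ((m + t) * j) * n ^ (m + t + j)) / β) ^ m := by
    calc A ^ (m + t) ≤ (F.card : ℝ) ^ (m + t - m) * B ^ m := pm
      _ ≤ (n ^ j) ^ t * (Dc * (p ^ ((m + t) * j) * n ^ (m + t + j)) / β) ^ m := by
          have h1 : (m + t - m) = t := by omega
          rw [h1]
          exact mul_le_mul (pow_le_pow_left₀ (by positivity) hFcard t)
            (pow_le_pow_left₀ hB0 hBQ m) (by positivity) (by positivity)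
  -- identify RHS^k
  have hq0 : (0 : ℝ) < Dc / β := by positivity
  have hq1 : Dc / β ≤ 1 := by
    rw [div_le_one hβ0]; exact hDcβ
  set q : ℝ := (Dc / β) ^ ((m : ℝ) / (m + t : ℕ)) with hqdef
  have hqpos : 0 ≤ q := by rw [hqdef]; positivity
  have hRHSpow : (q * (p ^ (j * m) * n ^ (j + m))) ^ (m + t)
      = (n ^ j) ^ t * (Dc * (p ^ ((m + t) * j) * n ^ (m + t + j)) / β) ^ m := by
    have hmt0 : ((m + t : ℕ) : ℝ) ≠ 0 := Nat.cast_ne_zero.2 (by omega)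
    have hqk : q ^ (m + t) = (Dc / β) ^ m := by
      rw [hqdef, ← Real.rpow_natCast ((Dc / β) ^ ((m : ℝ) / ((m + t : ℕ) : ℝ))) (m + t),
        ← Real.rpow_mul hq0.le, div_mul_cancel₀ _ hmt0, Real.rpow_natCast]
    rw [mul_pow, hqk]
    field_simp
    ring
  have hApow : A ^ (m + t) ≤ (q * (p ^ (j * m) * n ^ (j + m))) ^ (m + t) := by
    rw [hRHSpow]; exact pm2
  have hAle : A ≤ q * (p ^ (j * m) * n ^ (j + m)) := by
    refine le_of_pow_le_pow_left₀ (by omega) (by positivity) hApow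
  have hqle : q ≤ (Dc / β) ^ ((1 : ℝ) / h) := by
    rw [hqdef]
    refine Real.rpow_le_rpow_of_exponent_ge hq0 hq1 ?_
    have hhR : (0 : ℝ) < (h : ℝ) := by exact_mod_cast (by omega : 0 < h)
    have hmtR : (0 : ℝ) < ((m + t : ℕ) : ℝ) := by exact_mod_cast (by omega : 0 < m + t)
    rw [div_le_div_iff₀ hhR hmtR]
    have hnat : (m + t : ℕ) ≤ h * m := le_trans hkh (Nat.le_mul_of_pos_right h (by omega))
    calc (1 : ℝ) * ((m + t : ℕ) : ℝ) = ((m + t : ℕ) : ℝ) := by ring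
      _ ≤ ((h * m : ℕ) : ℝ) := by exact_mod_cast hnat
      _ = (m : ℝ) * (h : ℝ) := by push_cast; ring
  calc A ≤ q * (p ^ (j * m) * n ^ (j + m)) := hAle
    _ ≤ (Dc / β) ^ ((1 : ℝ) / h) * (p ^ (j * m) * n ^ (j + m)) :=
        mul_le_mul_of_nonneg_right hqle (by positivity)


lemma badL {V : Type} [Fintype V] (G : SimpleGraph V) (α β p : ℝ) (h : ℕ) (hh : 1 ≤ h)
    (hβ0 : 0 < β) (hβ1 : β < 1) (hα0 : 0 < α) (hα1 : α ≤ 1) (hp : 0 ≤ p) :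
    ∀ i d j m : ℕ, α ≤ sconst β h (d + i) / 2 → 1 ≤ m → m ≤ j → j ≤ h →
    ∑ S : Fin j → V, (if ¬ IsGood G α β p h i j S then (Nat.card (commNbhd G S) : ℝ) ^ m else 0)
      ≤ sconst β h d * (p ^ (j * m) * (Fintype.card V : ℝ) ^ (j + m)) := by
  intro i
  induction i with
  | zero =>
    intro d j m hαs hm hmj hjh
    have e : ∀ S : Fin j → V, IsGood G α β p h 0 j S =
        (α * p ^ j * (Fintype.card V : ℝ) ≤ (Nat.card (commNbhd G S) : ℝ)) := fun S => rfl
    simp only [e]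
    refine le_trans (bad0 G α p hα0.le hp j m) ?_
    have hsd := sconst_pos hβ0 hh d
    have hαm : α ^ m ≤ sconst β h d := by
      have h1 : α ^ m ≤ α ^ 1 := pow_le_pow_of_le_one hα0.le hα1 hm
      have h2 : sconst β h (d + 0) ≤ sconst β h d := le_of_eq (by rw [Nat.add_zero])
      have h3 : α ≤ sconst β h (d + 0) / 2 := hαs
      nlinarith [sconst_pos hβ0 hh (d + 0)]
    exact mul_le_mul_of_nonneg_right hαm (by positivity)
  | succ i ih =>
    intro d j m hαs hm hmj hjh
    have hj1 : 1 ≤ j := le_trans hm hmj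
    set n : ℝ := (Fintype.card V : ℝ) with hn
    set x : (Fin j → V) → ℝ := fun S => (Nat.card (commNbhd G S) : ℝ) with hx
    have hx0 : ∀ S, 0 ≤ x S := fun S => by positivity
    have hpoint : ∀ S : Fin j → V,
        (if ¬ IsGood G α β p h (i+1) j S then x S ^ m else 0)
        ≤ (if ¬ (α * p ^ j * n ≤ x S) then x S ^ m else 0)
          + ∑ k ∈ Icc j h, (if β * x S ^ k <
              (Nat.card {T : Fin k → V // (∀ a, T a ∈ commNbhd G S) ∧
                ¬ IsGood G α β p h i k T} : ℝ) then x S ^ m else 0) := by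
      intro S
      have hxm : (0:ℝ) ≤ x S ^ m := by positivity
      have hsum0 : (0:ℝ) ≤ ∑ k ∈ Icc j h, (if β * x S ^ k <
            (Nat.card {T : Fin k → V // (∀ a, T a ∈ commNbhd G S) ∧
              ¬ IsGood G α β p h i k T} : ℝ) then x S ^ m else 0) :=
        Finset.sum_nonneg fun k _ => ite_nonneg _ _ hxm
      by_cases hg : IsGood G α β p h (i+1) j S
      · rw [if_neg (not_not_intro hg)]
        exact add_nonneg (ite_nonneg _ _ hxm) hsum0
      · rw [if_pos hg]
        by_cases h0 : α * p ^ j * n ≤ x S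
        · have hgk : ¬ ∀ k : ℕ, j ≤ k → k ≤ h → (1 - β) * x S ^ k ≤
              (Nat.card {T : Fin k → V // (∀ a, T a ∈ commNbhd G S) ∧
                IsGood G α β p h i k T} : ℝ) := fun hB => hg ⟨h0, hB⟩
          push_neg at hgk
          obtain ⟨k, hk1, hk2, hlt⟩ := hgk
          have hsplit := count_split G (IsGood G α β p h i k) S
          have hsplitR : (Nat.card {T : Fin k → V // (∀ a, T a ∈ commNbhd G S) ∧
                IsGood G α β p h i k T} : ℝ)
              + (Nat.card {T : Fin k → V // (∀ a, T a ∈ commNbhd G S) ∧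
                ¬ IsGood G α β p h i k T} : ℝ) = x S ^ k := by
            have h5 := congrArg (fun z : ℕ => (z : ℝ)) hsplit
            push_cast at h5
            exact h5
          have hcond : β * x S ^ k <
              (Nat.card {T : Fin k → V // (∀ a, T a ∈ commNbhd G S) ∧
                ¬ IsGood G α β p h i k T} : ℝ) := by nlinarith
          refine le_add_of_nonneg_of_le (ite_nonneg _ _ hxm) ?_
          have hsingle := Finset.single_le_sum
            (f := fun k' => if β * x S ^ k' <
              (Nat.card {T : Fin k' → V // (∀ a, T a ∈ commNbhd G S) ∧
                ¬ IsGood G α β p h i k' T} : ℝ) then x S ^ m else 0)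
            (fun k' _ => ite_nonneg _ _ hxm) (Finset.mem_Icc.2 ⟨hk1, hk2⟩)
          beta_reduce at hsingle
          rwa [if_pos hcond] at hsingle
        · refine le_add_of_le_of_nonneg ?_ hsum0
          rw [if_pos h0]
    have hIH : ∀ k ∈ Icc j h,
        ∑ S : Fin j → V, (if β * x S ^ k <
            (Nat.card {T : Fin k → V // (∀ a, T a ∈ commNbhd G S) ∧
              ¬ IsGood G α β p h i k T} : ℝ) then x S ^ m else 0)
          ≤ (sconst β h d / (2 * h)) * (p ^ (j * m) * n ^ (j + m)) := by
      intro k hk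
      obtain ⟨hjk, hkh⟩ := Finset.mem_Icc.1 hk
      have hαs' : α ≤ sconst β h (d + 1 + i) / 2 := by
        rw [show d + 1 + i = d + (i + 1) by omega]; exact hαs
      have hD := ih (d + 1) k j hαs' hj1 hjk hkh
      have happ := lemA G α β p h i j k m hβ0 hβ1 hp hm (le_trans hmj hjk) hkh hj1
        (sconst β h (d + 1)) (sconst_pos hβ0 hh (d + 1)) (sconst_le hβ0 hβ1 hh (d + 1)) hD
      refine le_trans happ ?_
      have heq : (sconst β h (d + 1) / β) ^ ((1 : ℝ) / h) = sconst β h d / (2 * h) := by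
        have hz0 : (0:ℝ) ≤ sconst β h d / (2 * h) := by
          have := sconst_pos hβ0 hh d
          positivity
        have e1 : sconst β h (d + 1) / β = (sconst β h d / (2 * h)) ^ h := by
          show β * (sconst β h d / (2 * h)) ^ h / β = _
          rw [mul_div_cancel_left₀ _ (ne_of_gt hβ0)]
        rw [e1, ← Real.rpow_natCast (sconst β h d / (2 * h)) h, ← Real.rpow_mul hz0,
          mul_one_div, div_self (ne_of_gt (by exact_mod_cast (by omega : 0 < h) : (0:ℝ) < (h:ℝ))),
          Real.rpow_one]
      rw [heq]
    calc ∑ S : Fin j → V, (if ¬ IsGood G α β p h (i+1) j S then x S ^ m else 0)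
        ≤ ∑ S : Fin j → V, ((if ¬ (α * p ^ j * n ≤ x S) then x S ^ m else 0)
          + ∑ k ∈ Icc j h, (if β * x S ^ k <
              (Nat.card {T : Fin k → V // (∀ a, T a ∈ commNbhd G S) ∧
                ¬ IsGood G α β p h i k T} : ℝ) then x S ^ m else 0)) :=
          Finset.sum_le_sum fun S _ => hpoint S
      _ = (∑ S : Fin j → V, (if ¬ (α * p ^ j * n ≤ x S) then x S ^ m else 0))
          + ∑ k ∈ Icc j h, ∑ S : Fin j → V, (if β * x S ^ k <
              (Nat.card {T : Fin k → V // (∀ a, T a ∈ commNbhd G S) ∧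
                ¬ IsGood G α β p h i k T} : ℝ) then x S ^ m else 0) := by
          rw [Finset.sum_add_distrib, Finset.sum_comm]
      _ ≤ α ^ m * (p ^ (j * m) * n ^ (j + m))
          + ∑ k ∈ Icc j h, (sconst β h d / (2 * h)) * (p ^ (j * m) * n ^ (j + m)) :=
          add_le_add (bad0 G α p hα0.le hp j m) (Finset.sum_le_sum hIH)
      _ ≤ sconst β h d * (p ^ (j * m) * n ^ (j + m)) := by
          rw [Finset.sum_const, Nat.card_Icc]
          have hsd := sconst_pos hβ0 hh d
          have hP0 : (0:ℝ) ≤ p ^ (j * m) * n ^ (j + m) := by positivity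
          have hcard : ((h + 1 - j : ℕ) : ℝ) ≤ (h : ℝ) := by
            exact_mod_cast (by omega : h + 1 - j ≤ h)
          have hhR : (0:ℝ) < (h : ℝ) := by exact_mod_cast (by omega : 0 < h)
          have hαm : α ^ m ≤ sconst β h d / 2 := by
            have h1 : α ^ m ≤ α ^ 1 := pow_le_pow_of_le_one hα0.le hα1 hm
            have h2 : sconst β h (d + (i+1)) ≤ sconst β h d :=
              sconst_anti hβ0 hβ1 hh (by omega)
            have := sconst_pos hβ0 hh (d + (i+1))
            nlinarith
          have hsum : ((h + 1 - j : ℕ) : ℝ) • ((sconst β h d / (2 * h)) * (p ^ (j * m) * n ^ (j + m)))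
              ≤ (sconst β h d / 2) * (p ^ (j * m) * n ^ (j + m)) := by
            rw [smul_eq_mul]
            have hC0 : (0:ℝ) ≤ (sconst β h d / (2 * h)) * (p ^ (j * m) * n ^ (j + m)) := by
              positivity
            calc ((h + 1 - j : ℕ) : ℝ) * ((sconst β h d / (2 * h)) * (p ^ (j * m) * n ^ (j + m)))
                ≤ (h : ℝ) * ((sconst β h d / (2 * h)) * (p ^ (j * m) * n ^ (j + m))) :=
                  mul_le_mul_of_nonneg_right hcard hC0
              _ = (sconst β h d / 2) * (p ^ (j * m) * n ^ (j + m)) := by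
                  field_simp
            
          have := add_le_add (mul_le_mul_of_nonneg_right hαm hP0) hsum
          calc α ^ m * (p ^ (j * m) * n ^ (j + m)) + (h + 1 - j : ℕ) •
                ((sconst β h d / (2 * h)) * (p ^ (j * m) * n ^ (j + m)))
              ≤ (sconst β h d / 2) * (p ^ (j * m) * n ^ (j + m))
                + (sconst β h d / 2) * (p ^ (j * m) * n ^ (j + m)) := by
                refine add_le_add (mul_le_mul_of_nonneg_right hαm hP0) ?_
                rw [← Nat.cast_smul_eq_nsmul ℝ]
                exact hsum
            _ = sconst β h d * (p ^ (j * m) * n ^ (j + m)) := by ring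


variable {V : Type} [Fintype V] (G : SimpleGraph V) [DecidableRel G.Adj]

lemma sum_comm_card (r : ℕ) :
    ∑ U : Fin r → V, (Nat.card (commNbhd G U) : ℝ) = ∑ v : V, (G.degree v : ℝ) ^ r := by
  classical
  have e1 : ∀ U : Fin r → V, (Nat.card (commNbhd G U) : ℝ)
      = ∑ v : V, if v ∈ commNbhd G U then (1:ℝ) else 0 := by
    intro U
    exact card_subtype_eq_sum (fun v => v ∈ commNbhd G U)
  rw [Finset.sum_congr rfl fun U _ => e1 U, Finset.sum_comm]
  refine Finset.sum_congr rfl fun v _ => ?_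
  have e2 : ∀ U : Fin r → V, (v ∈ commNbhd G U) ↔ (∀ a, U a ∈ G.neighborSet v) := by
    intro U
    simp only [commNbhd, Set.mem_setOf_eq, SimpleGraph.mem_neighborSet]
    exact ⟨fun H a => (H a).symm, fun H a => (H a).symm⟩
  calc ∑ U : Fin r → V, (if v ∈ commNbhd G U then (1:ℝ) else 0)
      = ∑ U : Fin r → V, (if (∀ a, U a ∈ G.neighborSet v) then (1:ℝ) else 0) :=
        Finset.sum_congr rfl fun U _ => by
          by_cases hc : v ∈ commNbhd G U
          · rw [if_pos hc, if_pos ((e2 U).1 hc)]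
          · rw [if_neg hc, if_neg (fun hc2 => hc ((e2 U).2 hc2))]
    _ = ((Nat.card (G.neighborSet v) : ℕ) : ℝ) ^ r := by
        rw [← card_subtype_eq_sum (fun U : Fin r → V => ∀ a, U a ∈ G.neighborSet v),
          card_pi_mem (G.neighborSet v) r]
        push_cast
        rfl
    _ = (G.degree v : ℝ) ^ r := by
        congr 2
        rw [Nat.card_eq_fintype_card]
        exact SimpleGraph.card_neighborSet_eq_degree G v

lemma sum_inj_card (j r : ℕ) :
    ∑ S : Fin j → V, (if Function.Injective S then (Nat.card (commNbhd G S) : ℝ) ^ r else 0)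
      = ∑ U : Fin r → V, (((Nat.card (commNbhd G U)).descFactorial j : ℕ) : ℝ) := by
  classical
  have e1 : ∀ S : Fin j → V,
      (if Function.Injective S then (Nat.card (commNbhd G S) : ℝ) ^ r else 0)
      = ∑ U : Fin r → V,
          (if Function.Injective S ∧ (∀ a, U a ∈ commNbhd G S) then (1:ℝ) else 0) := by
    intro S
    by_cases hS : Function.Injective S
    · rw [if_pos hS]
      have : ((Nat.card (commNbhd G S) : ℝ)) ^ r
          = ((Nat.card {U : Fin r → V // ∀ a, U a ∈ commNbhd G S} : ℕ) : ℝ) := by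
        rw [card_pi_mem (commNbhd G S) r]; push_cast; rfl
      rw [this, card_subtype_eq_sum (fun U : Fin r → V => ∀ a, U a ∈ commNbhd G S)]
      exact Finset.sum_congr rfl fun U _ => by
        by_cases hc : ∀ a, U a ∈ commNbhd G S
        · rw [if_pos hc, if_pos ⟨hS, hc⟩]
        · rw [if_neg hc, if_neg (by tauto)]
    · rw [if_neg hS]
      symm
      refine Finset.sum_eq_zero fun U _ => ?_
      rw [if_neg (by tauto)]
  rw [Finset.sum_congr rfl fun S _ => e1 S, Finset.sum_comm]
  refine Finset.sum_congr rfl fun U _ => ?_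
  calc ∑ S : Fin j → V, (if Function.Injective S ∧ (∀ a, U a ∈ commNbhd G S) then (1:ℝ) else 0)
      = ∑ S : Fin j → V, (if Function.Injective S ∧ (∀ b, S b ∈ commNbhd G U) then (1:ℝ) else 0) :=
        Finset.sum_congr rfl fun S _ => by
          by_cases hc : Function.Injective S ∧ (∀ a, U a ∈ commNbhd G S)
          · rw [if_pos hc, if_pos ⟨hc.1, (mem_comm_symm G S U).1 hc.2⟩]
          · rw [if_neg hc, if_neg (fun hc2 => hc ⟨hc2.1, (mem_comm_symm G S U).2 hc2.2⟩)]
    _ = (((Nat.card (commNbhd G U)).descFactorial j : ℕ) : ℝ) := by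
        rw [← card_subtype_eq_sum
          (fun S : Fin j → V => Function.Injective S ∧ ∀ b, S b ∈ commNbhd G U),
          card_inj_mem (commNbhd G U) j]


end NG
end NGsection

open Finset in
open scoped Classical in
theorem nested_goodness_distinct (h r : ℕ) (hr : 1 ≤ r) (hrh : r ≤ h) (β : ℝ)
    (hβ0 : 0 < β) (hβ1 : β < 1) :
    ∃ α : ℝ, 0 < α ∧
      ∀ (V : Type) [Fintype V] [Nonempty V] (G : SimpleGraph V) [DecidableRel G.Adj],
        ∀ i j : ℕ, 1 ≤ i → i ≤ h → r ≤ j → j ≤ h →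
          rnormDensity G r > 4 * j * (Fintype.card V : ℝ) ^ (-(r : ℝ)⁻¹) →
          (1 / 2 ^ (j + 1) - β) * (Fintype.card V : ℝ) ^ (j + r) *
              rnormDensity G r ^ (j * r) ≤
            ∑ S : Fin j → V,
              (if IsGood G α β (rnormDensity G r) h i j S ∧ Function.Injective S then
                (Nat.card (commNbhd G S) : ℝ) ^ r else 0) := by
  classical
  have hh1 : 1 ≤ h := le_trans hr hrh
  refine ⟨NG.sconst β h h / 2, by have := NG.sconst_pos hβ0 hh1 h; positivity, ?_⟩
  set α : ℝ := NG.sconst β h h / 2 with hα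
  intro V _ _ G _ i j hi1 hih hrj hjh hpbig
  have hα0 : 0 < α := by have := NG.sconst_pos hβ0 hh1 h; positivity
  have hα1 : α ≤ 1 := by
    have h1 := NG.sconst_le hβ0 hβ1 hh1 h
    have h2 := NG.sconst_pos hβ0 hh1 h
    rw [hα]; linarith
  set n : ℝ := (Fintype.card V : ℝ) with hn
  have hn1 : (1:ℝ) ≤ n := by
    rw [hn]; exact_mod_cast Fintype.card_pos
  have hn0 : (0:ℝ) < n := lt_of_lt_of_le one_pos hn1
  set p : ℝ := rnormDensity G r with hp
  have hj1 : 1 ≤ j := le_trans hr hrj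
  have hQ0 : (0:ℝ) ≤ (∑ v : V, (G.degree v : ℝ) ^ r) / n ^ (r + 1) := by positivity
  have hp0 : 0 ≤ p := by
    rw [hp, rnormDensity]; exact Real.rpow_nonneg hQ0 _
  have hrR : ((r:ℝ)) ≠ 0 := by exact_mod_cast (by omega : r ≠ 0)
  have hpow : p ^ r = (∑ v : V, (G.degree v : ℝ) ^ r) / n ^ (r + 1) := by
    rw [hp, rnormDensity, ← Real.rpow_natCast
      (((∑ v : V, (G.degree v : ℝ) ^ r) / (Fintype.card V : ℝ) ^ (r + 1)) ^ ((r : ℝ)⁻¹)) r,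
      ← Real.rpow_mul (by positivity), inv_mul_cancel₀ hrR, Real.rpow_one, ← hn]
  have hpr : p ^ r * n ^ (r + 1) = ∑ v : V, (G.degree v : ℝ) ^ r := by
    rw [hpow, div_mul_cancel₀]
    positivity
  -- hypothesis conversion
  have hpn : (4 * (j:ℝ)) ^ r < p ^ r * n := by
    have hb0 : (0:ℝ) ≤ 4 * (j:ℝ) * n ^ (-(r : ℝ)⁻¹) := by positivity
    have hlt : (4 * (j:ℝ) * n ^ (-(r : ℝ)⁻¹)) ^ r < p ^ r := by
      apply pow_lt_pow_left₀ hpbig hb0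
      omega
    have hexp : (n ^ (-(r : ℝ)⁻¹)) ^ (r:ℕ) = n⁻¹ := by
      rw [← Real.rpow_natCast (n ^ (-(r : ℝ)⁻¹)) r, ← Real.rpow_mul hn0.le, neg_mul,
        inv_mul_cancel₀ hrR, Real.rpow_neg_one]
    rw [mul_pow, hexp] at hlt
    calc (4 * (j:ℝ)) ^ r = ((4 * (j:ℝ)) ^ r * n⁻¹) * n := by field_simp
      _ < p ^ r * n := by
          exact mul_lt_mul_of_pos_right hlt hn0
  -- split j = j' + 1
  obtain ⟨j', rfl⟩ : ∃ j', j = j' + 1 := ⟨j - 1, by omega⟩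
  set x : (Fin r → V) → ℝ := fun U => (Nat.card (commNbhd G U) : ℝ) with hxU
  have hx0 : ∀ U, 0 ≤ x U := fun U => by positivity
  set X : ℝ := ∑ U : Fin r → V, x U ^ (j' + 1) with hX
  have hX0 : 0 ≤ X := Finset.sum_nonneg fun U _ => by positivity
  set M : ℝ := p ^ ((j' + 1) * r) * n ^ ((j' + 1) + r) with hM
  have hM0 : 0 ≤ M := by rw [hM]; positivity
  have hsumU : ∑ U : Fin r → V, x U = p ^ r * n ^ (r + 1) := by
    rw [hxU, NG.sum_comm_card G r, ← hpr]
  have hcardU : (((univ : Finset (Fin r → V)).card : ℕ) : ℝ) = n ^ r := by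
    rw [Finset.card_univ, Fintype.card_fun, Fintype.card_fin, hn]
    push_cast
    rfl
  have hXM : M ≤ X := by
    have hpm := NG.pow_mean (univ : Finset (Fin r → V)) x (fun U _ => hx0 U)
      (m := 1) (k := j' + 1) le_rfl (by omega)
    simp only [pow_one] at hpm
    rw [hsumU, hcardU] at hpm
    have h1 : (j' + 1 - 1) = j' := by omega
    rw [h1] at hpm
    -- hpm : (p^r * n^(r+1))^(j'+1) ≤ (n^r)^j' * X
    have hid : (p ^ r * n ^ (r + 1)) ^ (j' + 1) = M * (n ^ r) ^ j' := by
      rw [hM]; ring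
    rw [hid] at hpm
    have hpos : (0:ℝ) < (n ^ r) ^ j' := by positivity
    have := (mul_le_mul_iff_of_pos_right hpos).1 (by linarith [hpm] : M * (n ^ r) ^ j' ≤ X * (n ^ r) ^ j')
    exact this
  have hpnle : (4 * ((j' + 1 : ℕ) : ℝ)) ^ r ≤ p ^ r * n := le_of_lt hpn
  set DF : ℝ :=
    ∑ U : Fin r → V, (((Nat.card (commNbhd G U)).descFactorial (j' + 1) : ℕ) : ℝ) with hDF
  have hDF0 : 0 ≤ DF := Finset.sum_nonneg fun U _ => by positivity
  -- M ≤ 2 ^ (j' + 2) * DF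
  have hDFM : M ≤ 2 ^ (j' + 2) * DF := by
    rcases Nat.eq_zero_or_pos j' with rfl | hj'pos
    · -- j = 1
      have hDFeq : DF = p ^ r * n ^ (r + 1) := by
        rw [hDF, ← hsumU, hxU]
        exact Finset.sum_congr rfl fun U _ => by rw [Nat.descFactorial_one]
      have hMeq : M = p ^ r * n ^ (r + 1) := by rw [hM]; ring_nf
      rw [hDFeq, hMeq]
      have hq : (0:ℝ) ≤ p ^ r * n ^ (r + 1) := by positivity
      norm_num
      linarith [hq]
    · -- j ≥ 2
      set T : ℝ := 2 * ((j' + 1 : ℕ) : ℝ) with hT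
      have hT0 : (0:ℝ) < T := by rw [hT]; positivity
      set big : ℝ := ∑ U : Fin r → V, (if T ≤ x U then x U ^ (j' + 1) else 0) with hbigdef
      set small : ℝ := ∑ U : Fin r → V, (if ¬ (T ≤ x U) then x U ^ (j' + 1) else 0) with hsmalldef
      have hsplitX : big + small = X := by
        rw [hbigdef, hsmalldef, hX, ← Finset.sum_add_distrib]
        refine Finset.sum_congr rfl fun U _ => ?_
        by_cases hc : T ≤ x U
        · rw [if_pos hc, if_neg (not_not_intro hc), add_zero]
        · rw [if_neg hc, if_pos hc, zero_add]
      have hbig : big ≤ 2 ^ (j' + 1) * DF := by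
        rw [hbigdef, hDF, Finset.mul_sum]
        refine Finset.sum_le_sum fun U _ => ?_
        by_cases hc : T ≤ x U
        · rw [if_pos hc]
          have hnb : 2 * (j' + 1) ≤ Nat.card (commNbhd G U) := by
            have : ((2 * (j' + 1) : ℕ) : ℝ) ≤ (Nat.card (commNbhd G U) : ℝ) := by
              rw [hT] at hc; push_cast at hc ⊢; convert hc using 1
            exact_mod_cast this
          have hd1 : ((((Nat.card (commNbhd G U)) + 1 - (j' + 1) : ℕ) : ℝ)) ^ (j' + 1)
              ≤ (((Nat.card (commNbhd G U)).descFactorial (j' + 1) : ℕ) : ℝ) := by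
            exact_mod_cast Nat.pow_sub_le_descFactorial (Nat.card (commNbhd G U)) (j' + 1)
          have hd2 : x U / 2 ≤ (((Nat.card (commNbhd G U)) + 1 - (j' + 1) : ℕ) : ℝ) := by
            have hle : j' + 1 ≤ Nat.card (commNbhd G U) + 1 := by omega
            rw [Nat.cast_sub hle]
            push_cast
            rw [hxU]
            have : ((2 * (j' + 1) : ℕ) : ℝ) ≤ (Nat.card (commNbhd G U) : ℝ) := by
              exact_mod_cast hnb
            push_cast at this
            simp only
            linarith
          have hd3 : (x U / 2) ^ (j' + 1)
              ≤ (((Nat.card (commNbhd G U)).descFactorial (j' + 1) : ℕ) : ℝ) :=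
            le_trans (pow_le_pow_left₀ (by positivity) hd2 (j' + 1)) hd1
          calc x U ^ (j' + 1) = 2 ^ (j' + 1) * (x U / 2) ^ (j' + 1) := by
                rw [div_pow]; field_simp
            _ ≤ 2 ^ (j' + 1) * (((Nat.card (commNbhd G U)).descFactorial (j' + 1) : ℕ) : ℝ) :=
                mul_le_mul_of_nonneg_left hd3 (by positivity)
        · rw [if_neg hc]
          positivity
      have hsmall : small ≤ T ^ j' * (p ^ r * n ^ (r + 1)) := by
        rw [hsmalldef, ← hsumU, Finset.mul_sum]
        refine Finset.sum_le_sum fun U _ => ?_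
        by_cases hc : T ≤ x U
        · rw [if_neg (not_not_intro hc)]
          positivity
        · rw [if_pos hc]
          have hxT : x U ≤ T := le_of_not_ge hc
          calc x U ^ (j' + 1) = x U ^ j' * x U := by ring
            _ ≤ T ^ j' * x U := mul_le_mul_of_nonneg_right
                (pow_le_pow_left₀ (hx0 U) hxT j') (hx0 U)
      have hsmallX : small * 2 ^ j' ≤ X := by
        have h1 : (2:ℝ) ^ j' * T ^ j' * (p ^ r * n ^ (r + 1)) ≤ M := by
          have e1 : (2:ℝ) ^ j' * T ^ j' = (4 * ((j' + 1 : ℕ) : ℝ)) ^ j' := by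
            rw [hT, ← mul_pow]; congr 1; ring
          have e2 : M = (p ^ r * n) ^ j' * (p ^ r * n ^ (r + 1)) := by rw [hM]; ring
          rw [e1, e2]
          refine mul_le_mul_of_nonneg_right ?_ (by positivity)
          calc (4 * ((j' + 1 : ℕ) : ℝ)) ^ j' ≤ ((4 * ((j' + 1 : ℕ) : ℝ)) ^ r) ^ j' := by
                rw [← pow_mul]
                refine pow_le_pow_right₀ ?_ (Nat.le_mul_of_pos_left j' (by omega))
                have : (1:ℝ) ≤ ((j' + 1 : ℕ) : ℝ) := by exact_mod_cast (by omega : 1 ≤ j' + 1)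
                nlinarith
            _ ≤ (p ^ r * n) ^ j' := pow_le_pow_left₀ (by positivity) hpnle j'
        calc small * 2 ^ j' ≤ (T ^ j' * (p ^ r * n ^ (r + 1))) * 2 ^ j' :=
              mul_le_mul_of_nonneg_right hsmall (by positivity)
          _ = 2 ^ j' * T ^ j' * (p ^ r * n ^ (r + 1)) := by ring
          _ ≤ M := h1
          _ ≤ X := hXM
      have hsmall0 : 0 ≤ small := Finset.sum_nonneg fun U _ => NG.ite_nonneg _ _ (by positivity)
      have h2j : (2:ℝ) * small ≤ X := by
        have h2 : (2:ℝ) ≤ 2 ^ j' := by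
          calc (2:ℝ) = 2 ^ 1 := (pow_one 2).symm
          _ ≤ 2 ^ j' := pow_le_pow_right₀ one_le_two hj'pos
        nlinarith
      -- M ≤ X ≤ 2 * big = 2 * (X - small) ... : X ≤ 2 * big
      have : M ≤ 2 ^ (j' + 2) * DF := by
        have hXbig : X ≤ 2 * big := by nlinarith [hsplitX]
        calc M ≤ X := hXM
          _ ≤ 2 * big := hXbig
          _ ≤ 2 * (2 ^ (j' + 1) * DF) := by linarith [hbig]
          _ = 2 ^ (j' + 2) * DF := by ring
      exact this
  -- bad sum bound
  have hαs : α ≤ NG.sconst β h (0 + i) / 2 := by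
    rw [hα]
    have := NG.sconst_anti hβ0 hβ1 hh1 (by omega : 0 + i ≤ h)
    linarith
  have hbad := NG.badL G α β p h hh1 hβ0 hβ1 hα0 hα1 hp0 i 0 (j' + 1) r hαs hr hrj hjh
  have hs0 : NG.sconst β h 0 = β := rfl
  rw [hs0] at hbad
  -- injective sum
  have hinj := NG.sum_inj_card G (j' + 1) r
  -- pointwise combination
  have hpoint : ∀ S : Fin (j' + 1) → V,
      (if Function.Injective S then (Nat.card (commNbhd G S) : ℝ) ^ r else 0)
        - (if ¬ IsGood G α β p h i (j' + 1) S then (Nat.card (commNbhd G S) : ℝ) ^ r else 0)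
      ≤ (if IsGood G α β p h i (j' + 1) S ∧ Function.Injective S then
          (Nat.card (commNbhd G S) : ℝ) ^ r else 0) := by
    intro S
    have hc0 : (0:ℝ) ≤ (Nat.card (commNbhd G S) : ℝ) ^ r := by positivity
    by_cases hg : IsGood G α β p h i (j' + 1) S <;>
      by_cases hi : Function.Injective S <;>
        simp [hg, hi] <;> linarith [hc0]
  have hfinal : DF - β * M ≤ ∑ S : Fin (j' + 1) → V,
      (if IsGood G α β p h i (j' + 1) S ∧ Function.Injective S then
        (Nat.card (commNbhd G S) : ℝ) ^ r else 0) := by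
    have h1 : DF - β * M ≤ (∑ S : Fin (j' + 1) → V,
        (if Function.Injective S then (Nat.card (commNbhd G S) : ℝ) ^ r else 0))
        - ∑ S : Fin (j' + 1) → V,
          (if ¬ IsGood G α β p h i (j' + 1) S then (Nat.card (commNbhd G S) : ℝ) ^ r else 0) := by
      rw [hinj]
      have : M = p ^ ((j' + 1) * r) * n ^ ((j' + 1) + r) := hM
      rw [hDF]
      rw [this]
      linarith [hbad]
    refine le_trans h1 ?_
    rw [← Finset.sum_sub_distrib]
    exact Finset.sum_le_sum fun S _ => hpoint S
  -- conclude
  have hpow2 : (0:ℝ) < 2 ^ (j' + 2) := by positivity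
  have hDFge : M / 2 ^ (j' + 2) ≤ DF := by
    rw [div_le_iff₀ hpow2]
    calc M ≤ 2 ^ (j' + 2) * DF := hDFM
      _ = DF * 2 ^ (j' + 2) := by ring
  calc (1 / 2 ^ ((j' + 1) + 1) - β) * n ^ ((j' + 1) + r) * p ^ ((j' + 1) * r)
      = M / 2 ^ (j' + 2) - β * M := by rw [hM]; ring
    _ ≤ DF - β * M := by linarith [hDFge]
    _ ≤ ∑ S : Fin (j' + 1) → V,
        (if IsGood G α β p h i (j' + 1) S ∧ Function.Injective S then
          (Nat.card (commNbhd G S) : ℝ) ^ r else 0) := hfinal
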